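/- Let n ≥ 2, x ∈ T^n, j ∈ {1,...,n}, and μ a Borel probability measure on T^n. Then lim_{s→0+} [T^2_μ(x + s e^j) − 2 T^2_μ(x) + T^2_μ(x − s e^j)]/s = −2 μ(H(x + (1/2)e^j, j)). -/

import Mathlib

open MeasureTheory Filter

/-- The `p`-Wasserstein distance with cost function `c` (the distance of the
underlying space): infimum over couplings of `∫ c(x,y)^p dπ`, to the power `1/p`. -/
noncomputable def wassersteinDist {X : Type*} [MeasurableSpace X]
    (c : X → X → ℝ) (p : ℝ) (μ ν : Measure X) : ℝ :=
  sInf {r : ℝ | ∃ π : Measure (X × X), IsProbabilityMeasure π ∧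
      π.map Prod.fst = μ ∧ π.map Prod.snd = ν ∧
      r = ∫ q, c q.1 q.2 ^ p ∂π} ^ (1 / p)

/-- The flat `n`-dimensional torus `ℝ^n/ℤ^n`. -/
abbrev Torus (n : ℕ) := Fin n → AddCircle (1 : ℝ)

/-- The flat (ℓ²) metric on the torus: each coordinate distance is the
distance `|(x_k - y_k) mod 1|` on `ℝ/ℤ`. -/
noncomputable def torusDist {n : ℕ} (x y : Torus n) : ℝ :=
  Real.sqrt (∑ k, dist (x k) (y k) ^ 2)

/-- The `p`-Wasserstein potential of `μ` at `x`: `T^p_μ(x) = ∫ ϱ(x,y)^p dμ(y)`. -/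
noncomputable def torusPotential {n : ℕ} (p : ℝ) (μ : MeasureTheory.Measure (Torus n))
    (x : Torus n) : ℝ :=
  ∫ y, torusDist x y ^ p ∂μ

/-- The point `x + s·e^j` on the torus. -/
noncomputable def torusShift {n : ℕ} (x : Torus n) (j : Fin n) (s : ℝ) : Torus n :=
  fun i => if i = j then x i + ((s : ℝ) : AddCircle (1 : ℝ)) else x i

/-- The "hyperplane" `H(z,j) = {y : y_j = z_j}`. -/
def torusHyperplane {n : ℕ} (z : Torus n) (j : Fin n) : Set (Torus n) :=
  {y | y j = z j}

/-- The flat distance on `𝕋^{n-1}` between `x̌_j` and `y̌_j`, the points obtained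
from `x` and `y` by dropping the `j`-th coordinate. -/
noncomputable def torusDistDrop {n : ℕ} (j : Fin n) (x y : Torus n) : ℝ :=
  Real.sqrt (∑ i ∈ Finset.univ.erase j, dist (x i) (y i) ^ 2)


lemma addCircle_norm_coe_le (s : ℝ) : ‖((s : ℝ) : AddCircle (1:ℝ))‖ ≤ |s| :=
  (QuotientAddGroup.norm_mk_le_norm (m := s)).trans_eq (Real.norm_eq_abs s)

lemma addCircle_norm_coe_eq (r : ℝ) (hr : |r| ≤ 1/2) : ‖((r : ℝ) : AddCircle (1:ℝ))‖ = |r| :=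
  (AddCircle.norm_coe_eq_abs_iff (1:ℝ) one_ne_zero).mpr (by rwa [abs_one])

lemma addCircle_dist_le_half (z w : AddCircle (1:ℝ)) : dist z w ≤ 1/2 := by
  have h := AddCircle.norm_le_half_period (p := (1:ℝ)) (x := z - w) one_ne_zero
  rw [abs_one] at h
  rwa [dist_eq_norm]

lemma key_one_dim (a b : AddCircle (1:ℝ)) :
    Tendsto (fun s : ℝ =>
      (dist (a + ((s : ℝ) : AddCircle (1:ℝ))) b ^ 2 - 2 * dist a b ^ 2 +
        dist (a + ((-s : ℝ) : AddCircle (1:ℝ))) b ^ 2) / s)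
      (nhdsWithin 0 (Set.Ioi 0))
      (nhds (if b = a + (((1:ℝ)/2 : ℝ) : AddCircle (1:ℝ)) then -2 else 0)) := by
  haveI : Fact ((0:ℝ) < 1) := ⟨one_pos⟩
  obtain ⟨u, hu, hub⟩ : ∃ u ∈ Set.Ioc (-(1/2):ℝ) (-(1/2)+1), ((u:ℝ) : AddCircle (1:ℝ)) = b - a := by
    have h := AddCircle.coe_image_Ioc_eq (p := (1:ℝ)) (-(1/2))
    have : (b - a) ∈ (((↑) : ℝ → AddCircle (1:ℝ)) '' Set.Ioc (-(1/2)) (-(1/2)+1)) := by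
      rw [h]; trivial
    obtain ⟨u, hu, h2⟩ := this
    exact ⟨u, hu, h2⟩
  rw [show (-(1/2:ℝ)+1) = 1/2 by norm_num] at hu
  have hdist : ∀ s : ℝ, dist (a + ((s:ℝ) : AddCircle (1:ℝ))) b = ‖((u - s : ℝ) : AddCircle (1:ℝ))‖ := by
    intro s
    rw [dist_eq_norm', QuotientAddGroup.mk_sub, hub]
    congr 1
    abel
  by_cases hcase : u = 1/2
  · subst hcase
    have hb : b = a + (((1:ℝ)/2 : ℝ) : AddCircle (1:ℝ)) := by
      rw [hub]; abel
    rw [if_pos hb]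
    have hmem : Set.Ioo (0:ℝ) (1/2) ∈ nhdsWithin 0 (Set.Ioi 0) :=
      Ioo_mem_nhdsGT_of_mem ⟨le_refl _, by norm_num⟩
    have htends : Tendsto (fun s : ℝ => 2*s - 2) (nhdsWithin 0 (Set.Ioi 0)) (nhds (-2)) := by
      have h : Tendsto (fun s : ℝ => 2*s - 2) (nhds 0) (nhds (2*0 - 2)) :=
        ((continuous_const.mul continuous_id).sub continuous_const).tendsto 0
      simpa using h.mono_left nhdsWithin_le_nhds
    refine htends.congr' (eventuallyEq_of_mem hmem fun s hs => ?_)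
    obtain ⟨hs0, hs1⟩ := hs
    have e1 : dist (a + ((s:ℝ) : AddCircle (1:ℝ))) b = 1/2 - s := by
      rw [hdist s, addCircle_norm_coe_eq (1/2 - s) (by rw [abs_le]; constructor <;> linarith),
        abs_of_pos (by linarith)]
    have e3 : dist (a + ((-s:ℝ) : AddCircle (1:ℝ))) b = 1/2 - s := by
      rw [hdist (-s)]
      have hc : ((1/2 - -s : ℝ) : AddCircle (1:ℝ)) = (((s - 1/2 : ℝ)) : AddCircle (1:ℝ)) := by
        rw [show (1/2 - -s : ℝ) = (s - 1/2) + 1 by ring]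
        exact AddCircle.coe_add_period 1 (s - 1/2)
      rw [hc, addCircle_norm_coe_eq (s - 1/2) (by rw [abs_le]; constructor <;> linarith),
        abs_of_neg (by linarith)]
      ring
    have e2 : dist a b = 1/2 := by
      rw [dist_eq_norm', ← hub]
      have h := AddCircle.norm_half_period_eq (p := (1:ℝ))
      rw [abs_one] at h
      exact h
    rw [e1, e2, e3]
    field_simp
    ring
  · have hu2 : |u| < 1/2 := by
      rcases hu with ⟨h1, h2⟩
      rw [abs_lt]
      exact ⟨h1, lt_of_le_of_ne h2 hcase⟩
    have habs := abs_lt.mp hu2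
    have hb : b ≠ a + (((1:ℝ)/2 : ℝ) : AddCircle (1:ℝ)) := by
      intro hbe
      have hz : ((u - 1/2 : ℝ) : AddCircle (1:ℝ)) = 0 := by
        rw [QuotientAddGroup.mk_sub, hub, hbe]
        abel
      rw [AddCircle.coe_eq_zero_iff] at hz
      obtain ⟨m, hm⟩ := hz
      have hm' : (m:ℝ) = u - 1/2 := by
        rw [← hm]; simp
      have h1 : (-1:ℝ) < (m:ℝ) := by rw [hm']; linarith
      have h2 : (m:ℝ) < 0 := by rw [hm']; linarith
      have h1' : (-1:ℤ) < m := by exact_mod_cast h1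
      have h2' : m < 0 := by exact_mod_cast h2
      omega
    rw [if_neg hb]
    have hmem : Set.Ioo (0:ℝ) (1/2 - |u|) ∈ nhdsWithin 0 (Set.Ioi 0) :=
      Ioo_mem_nhdsGT_of_mem ⟨le_refl _, by linarith [abs_nonneg u]⟩
    have htends : Tendsto (fun s : ℝ => 2*s) (nhdsWithin 0 (Set.Ioi 0)) (nhds 0) := by
      have h : Tendsto (fun s : ℝ => 2*s) (nhds 0) (nhds (2*0)) :=
        (continuous_const.mul continuous_id).tendsto 0
      simpa using h.mono_left nhdsWithin_le_nhds
    refine htends.congr' (eventuallyEq_of_mem hmem fun s hs => ?_)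
    obtain ⟨hs0, hs1⟩ := hs
    have hsu : s < 1/2 - |u| := hs1
    have habs' : |u| < 1/2 := hu2
    have e1 : dist (a + ((s:ℝ) : AddCircle (1:ℝ))) b = |u - s| := by
      rw [hdist s, addCircle_norm_coe_eq (u - s)
        (by have n1 := neg_abs_le u; have n2 := le_abs_self u; rw [abs_le]; constructor <;> linarith)]
    have e3 : dist (a + ((-s:ℝ) : AddCircle (1:ℝ))) b = |u + s| := by
      rw [hdist (-s), sub_neg_eq_add, addCircle_norm_coe_eq (u + s)
        (by have n1 := neg_abs_le u; have n2 := le_abs_self u; rw [abs_le]; constructor <;> linarith)]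
    have e2 : dist a b = |u| := by
      rw [dist_eq_norm', ← hub, addCircle_norm_coe_eq u (le_of_lt habs')]
    rw [e1, e2, e3, sq_abs, sq_abs, sq_abs]
    field_simp
    ring

/-- Second-difference formula for the Wasserstein potential on the torus,
case `p = 2`: the limit recovers the mass of the hyperplane `H(x + ½e^j, j)`. -/
theorem torus_potential_second_difference_two {n : ℕ} (hn : 2 ≤ n)
    (x : Torus n) (j : Fin n) (μ : Measure (Torus n)) (hμ : IsProbabilityMeasure μ) :
    Tendsto (fun s : ℝ =>
        (torusPotential 2 μ (torusShift x j s) - 2 * torusPotential 2 μ x +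
          torusPotential 2 μ (torusShift x j (-s))) / s)
      (nhdsWithin 0 (Set.Ioi 0))
      (nhds (-2 * (μ (torusHyperplane (torusShift x j (1 / 2)) j)).toReal)) := by
  haveI : Fact ((0:ℝ) < 1) := ⟨one_pos⟩
  have hcont : ∀ z : Torus n, Continuous (fun y : Torus n => ∑ k, dist (z k) (y k)^2) :=
    fun z => continuous_finset_sum _ fun k _ => (continuous_const.dist (continuous_apply k)).pow 2
  have hmeas : ∀ z : Torus n, AEStronglyMeasurable (fun y : Torus n => ∑ k, dist (z k) (y k)^2) μ :=
    fun z => (hcont z).aestronglyMeasurable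
  have hint : ∀ z : Torus n, Integrable (fun y : Torus n => ∑ k, dist (z k) (y k)^2) μ := by
    intro z
    refine (integrable_const ((n:ℝ))).mono' (hmeas z) (ae_of_all _ fun y => ?_)
    rw [Real.norm_eq_abs, abs_of_nonneg (by positivity)]
    calc ∑ k, dist (z k) (y k)^2 ≤ ∑ _k : Fin n, (1:ℝ) := by
          refine Finset.sum_le_sum fun k _ => ?_
          have h1 : dist (z k) (y k) ≤ 1 := (addCircle_dist_le_half _ _).trans (by norm_num)
          calc dist (z k) (y k)^2 ≤ 1^2 := pow_le_pow_left₀ dist_nonneg h1 2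
            _ = 1 := one_pow 2
      _ = n := by simp
  have hpot : ∀ z : Torus n, torusPotential 2 μ z = ∫ y, ∑ k, dist (z k) (y k)^2 ∂μ := by
    intro z
    unfold torusPotential
    refine integral_congr_ae (ae_of_all _ fun y => ?_)
    unfold torusDist
    simp only
    rw [Real.rpow_two, Real.sq_sqrt (by positivity)]
  have hHmeas : MeasurableSet (torusHyperplane (torusShift x j (1/2)) j) := by
    have hHset : torusHyperplane (torusShift x j (1/2)) j
        = (fun y : Torus n => y j) ⁻¹' {x j + (((1:ℝ)/2 : ℝ) : AddCircle (1:ℝ))} := by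
      ext y
      simp [torusHyperplane, torusShift]
    rw [hHset]
    exact (measurable_pi_apply j) (measurableSet_singleton _)
  have hfun : ∀ s : ℝ,
      (torusPotential 2 μ (torusShift x j s) - 2 * torusPotential 2 μ x +
        torusPotential 2 μ (torusShift x j (-s))) / s
      = ∫ y, (dist (x j + ((s:ℝ) : AddCircle (1:ℝ))) (y j) ^ 2 - 2 * dist (x j) (y j) ^ 2 +
          dist (x j + ((-s:ℝ) : AddCircle (1:ℝ))) (y j) ^ 2) / s ∂μ := by
    intro s
    rw [integral_div]
    congr 1
    rw [hpot, hpot, hpot]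
    have h1 := hint (torusShift x j s)
    have h2 := hint x
    have h3 := hint (torusShift x j (-s))
    have hpt : (fun y : Torus n =>
        dist (x j + ((s:ℝ) : AddCircle (1:ℝ))) (y j) ^ 2 - 2 * dist (x j) (y j) ^ 2 +
          dist (x j + ((-s:ℝ) : AddCircle (1:ℝ))) (y j) ^ 2)
        = (fun y : Torus n =>
          (∑ k, dist (torusShift x j s k) (y k) ^ 2) - 2 * (∑ k, dist (x k) (y k) ^ 2) +
            (∑ k, dist (torusShift x j (-s) k) (y k) ^ 2)) := by
      funext y
      rw [Finset.mul_sum, ← Finset.sum_sub_distrib, ← Finset.sum_add_distrib,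
        Finset.sum_eq_single j (fun k _ hk => by simp [torusShift, hk]; ring)
          (fun hj => absurd (Finset.mem_univ j) hj)]
      simp [torusShift]
    have h12 : Integrable (fun y : Torus n =>
        (∑ k, dist (torusShift x j s k) (y k) ^ 2) - 2 * (∑ k, dist (x k) (y k) ^ 2)) μ :=
      h1.sub (h2.const_mul 2)
    have h2' : Integrable (fun y : Torus n => 2 * (∑ k, dist (x k) (y k) ^ 2)) μ :=
      h2.const_mul 2
    rw [hpt, integral_add h12 h3, integral_sub h1 h2', integral_const_mul]
  have hlim : Tendsto (fun s : ℝ =>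
      ∫ y, (dist (x j + ((s:ℝ) : AddCircle (1:ℝ))) (y j) ^ 2 - 2 * dist (x j) (y j) ^ 2 +
        dist (x j + ((-s:ℝ) : AddCircle (1:ℝ))) (y j) ^ 2) / s ∂μ)
      (nhdsWithin 0 (Set.Ioi 0))
      (nhds (∫ y, Set.indicator (torusHyperplane (torusShift x j (1/2)) j)
        (fun _ => (-2:ℝ)) y ∂μ)) := by
    refine tendsto_integral_filter_of_dominated_convergence (fun _ => (2:ℝ)) ?_ ?_
      (integrable_const 2) ?_
    · exact Eventually.of_forall fun s =>
        (((((continuous_const.dist (continuous_apply j)).pow 2).sub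
          (continuous_const.mul ((continuous_const.dist (continuous_apply j)).pow 2))).add
          ((continuous_const.dist (continuous_apply j)).pow 2)).div_const s).aestronglyMeasurable
    · refine eventually_nhdsWithin_of_forall fun s hs => ae_of_all _ fun y => ?_
      have hs0 : (0:ℝ) < s := hs
      have hb1 : ∀ t : ℝ,
          |dist (x j + ((t:ℝ) : AddCircle (1:ℝ))) (y j) ^ 2 - dist (x j) (y j) ^ 2| ≤ |t| := by
        intro t
        set D1 := dist (x j + ((t:ℝ) : AddCircle (1:ℝ))) (y j) with hD1
        set D2 := dist (x j) (y j) with hD2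
        have h12 : |D1 - D2| ≤ |t| := by
          have h := abs_dist_sub_le (x j + ((t:ℝ) : AddCircle (1:ℝ))) (x j) (y j)
          have hd : dist (x j + ((t:ℝ) : AddCircle (1:ℝ))) (x j)
              = ‖((t:ℝ) : AddCircle (1:ℝ))‖ := by
            rw [dist_eq_norm, add_sub_cancel_left]
          exact h.trans (by rw [hd]; exact addCircle_norm_coe_le t)
        have hsum : |D1 + D2| ≤ 1 := by
          rw [abs_of_nonneg (add_nonneg dist_nonneg dist_nonneg)]
          have ha := addCircle_dist_le_half (x j + ((t:ℝ) : AddCircle (1:ℝ))) (y j)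
          have hb := addCircle_dist_le_half (x j) (y j)
          rw [← hD1] at ha
          rw [← hD2] at hb
          linarith
        calc |D1^2 - D2^2| = |D1 - D2| * |D1 + D2| := by
              rw [← abs_mul]; congr 1; ring
          _ ≤ |t| * 1 := mul_le_mul h12 hsum (abs_nonneg _) (abs_nonneg _)
          _ = |t| := mul_one _
      rw [Real.norm_eq_abs, abs_div, abs_of_pos hs0, div_le_iff₀ hs0]
      have h1 := hb1 s
      have h3 := hb1 (-s)
      rw [abs_neg] at h3
      rw [abs_of_pos hs0] at h1 h3
      calc |dist (x j + ((s:ℝ) : AddCircle (1:ℝ))) (y j) ^ 2 - 2 * dist (x j) (y j) ^ 2 +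
            dist (x j + ((-s:ℝ) : AddCircle (1:ℝ))) (y j) ^ 2|
          ≤ |dist (x j + ((s:ℝ) : AddCircle (1:ℝ))) (y j) ^ 2 - dist (x j) (y j) ^ 2| +
            |dist (x j + ((-s:ℝ) : AddCircle (1:ℝ))) (y j) ^ 2 - dist (x j) (y j) ^ 2| := by
            have he : dist (x j + ((s:ℝ) : AddCircle (1:ℝ))) (y j) ^ 2 -
                2 * dist (x j) (y j) ^ 2 +
                dist (x j + ((-s:ℝ) : AddCircle (1:ℝ))) (y j) ^ 2
                = (dist (x j + ((s:ℝ) : AddCircle (1:ℝ))) (y j) ^ 2 - dist (x j) (y j) ^ 2) +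
                  (dist (x j + ((-s:ℝ) : AddCircle (1:ℝ))) (y j) ^ 2 - dist (x j) (y j) ^ 2) := by
              ring
            rw [he]
            exact abs_add_le _ _
        _ ≤ s + s := add_le_add h1 h3
        _ = 2 * s := by ring
    · refine ae_of_all _ fun y => ?_
      have hk := key_one_dim (x j) (y j)
      have hiff : (y ∈ torusHyperplane (torusShift x j (1/2)) j)
          ↔ y j = x j + (((1:ℝ)/2 : ℝ) : AddCircle (1:ℝ)) := by
        simp [torusHyperplane, torusShift]
      classical
      have heq : Set.indicator (torusHyperplane (torusShift x j (1/2)) j)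
          (fun _ => (-2:ℝ)) y
          = if y j = x j + (((1:ℝ)/2 : ℝ) : AddCircle (1:ℝ)) then (-2:ℝ) else 0 := by
        rw [Set.indicator_apply, if_congr hiff rfl rfl]
      rw [heq]
      exact hk
  have hind : ∫ y, Set.indicator (torusHyperplane (torusShift x j (1/2)) j)
      (fun _ => (-2:ℝ)) y ∂μ
      = -2 * (μ (torusHyperplane (torusShift x j (1/2)) j)).toReal := by
    rw [integral_indicator_const _ hHmeas, smul_eq_mul, mul_comm, measureReal_def]
  rw [hind] at hlim
  exact hlim.congr fun s => (hfun s).symm
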